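/- Let n ≥ 2. In the (non-reduced) root system of type BC_n, the minimum, over simple roots α_k ∈ Π (1 ≤ k ≤ n), of the coarse resonant codimension of Π ∖ {α_k} equals 2n − 1. -/

import Mathlib

namespace Stmt8

def ee (n : ℕ) (i : Fin n) : Fin n → ℝ := Pi.single i 1

def Sp (n : ℕ) : Set (Fin n → ℝ) :=
  {v | (∃ i j : Fin n, i < j ∧ (v = ee n i - ee n j ∨ v = ee n i + ee n j)) ∨
    (∃ i : Fin n, v = ee n i) ∨ ∃ i : Fin n, v = (2 : ℝ) • ee n i}

def alph (n : ℕ) (k : Fin n) : Fin n → ℝ :=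
  if h : (k : ℕ) + 1 < n then ee n k - ee n ⟨(k : ℕ) + 1, h⟩ else ee n k

def ray (n : ℕ) (v : Fin n → ℝ) : Set (Fin n → ℝ) := {w | ∃ c : ℝ, 0 < c ∧ w = c • v}

def S (n : ℕ) (k : Fin n) : Set (Set (Fin n → ℝ)) :=
  {R | ∃ v, (v ∈ Sp n ∧ v ∉ Submodule.span ℝ (Set.range (alph n) \ {alph n k})) ∧ R = ray n v}

lemma ee_self (n : ℕ) (i : Fin n) : ee n i i = 1 := Pi.single_eq_same i 1
lemma ee_ne (n : ℕ) {i j : Fin n} (h : j ≠ i) : ee n i j = 0 := Pi.single_eq_of_ne h 1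
lemma ee_apply (n : ℕ) (i j : Fin n) : ee n i j = if j = i then 1 else 0 := Pi.single_apply i 1 j

lemma ee_inj {n : ℕ} {a b : Fin n} (h : ee n a = ee n b) : a = b := by
  by_contra hne
  have h2 := congrFun h a
  rw [ee_self, ee_ne n hne] at h2
  norm_num at h2

lemma eq_of_ray_eq {n : ℕ} {v w : Fin n → ℝ}
    (hv : ∀ x, v x = -1 ∨ v x = 0 ∨ v x = 1) (hw : ∃ x, w x = 1)
    (h : ray n v = ray n w) : v = w := by
  have hv' : v ∈ ray n w := h ▸ ⟨1, one_pos, (one_smul _ _).symm⟩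
  obtain ⟨c, hc, hvc⟩ := hv'
  obtain ⟨x, hx⟩ := hw
  have hcx : v x = c := by rw [hvc]; simp [hx]
  have : c = 1 := by rcases hv x with h' | h' | h' <;> rw [hcx] at h' <;> linarith
  rw [hvc, this, one_smul]

lemma ray_two_smul (n : ℕ) (v : Fin n → ℝ) : ray n ((2:ℝ) • v) = ray n v := by
  ext w
  constructor
  · rintro ⟨c, hc, rfl⟩; exact ⟨2 * c, by linarith, by rw [smul_smul]; ring_nf⟩
  · rintro ⟨c, hc, rfl⟩; exact ⟨c / 2, by linarith, by rw [smul_smul]; ring_nf⟩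

noncomputable def phi (n : ℕ) (k : Fin n) : (Fin n → ℝ) →ₗ[ℝ] ℝ :=
  ∑ i ∈ Finset.univ.filter (fun i => i ≤ k), LinearMap.proj i

lemma phi_apply (n : ℕ) (k : Fin n) (v : Fin n → ℝ) :
    phi n k v = ∑ i ∈ Finset.univ.filter (fun i => i ≤ k), v i := by
  simp [phi]

lemma phi_ee (n : ℕ) (k i : Fin n) : phi n k (ee n i) = if i ≤ k then 1 else 0 := by
  rw [phi_apply, ee, Finset.sum_pi_single']
  simp

lemma span_le_ker (n : ℕ) (k : Fin n) :
    Submodule.span ℝ (Set.range (alph n) \ {alph n k}) ≤ LinearMap.ker (phi n k) := by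
  rw [Submodule.span_le]
  rintro w ⟨⟨m, rfl⟩, hm⟩
  have hmk : m ≠ k := fun h => hm (by rw [h]; rfl)
  simp only [SetLike.mem_coe, LinearMap.mem_ker]
  unfold alph
  split_ifs with h
  · rw [map_sub, phi_ee, phi_ee]
    by_cases hle : m ≤ k
    · have h2 : (⟨(m : ℕ) + 1, h⟩ : Fin n) ≤ k := by
        have : (m : ℕ) < (k : ℕ) := lt_of_le_of_ne hle (by simpa [Fin.ext_iff] using hmk)
        exact this
      rw [if_pos hle, if_pos h2]; ring
    · have h2 : ¬ ((⟨(m : ℕ) + 1, h⟩ : Fin n) ≤ k) := by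
        intro hc
        exact hle (le_trans (by exact Nat.le_succ (m : ℕ)) hc)
      rw [if_neg hle, if_neg h2]; ring
  · rw [phi_ee, if_neg]
    intro hc
    have h1 : (m : ℕ) ≤ (k : ℕ) := Fin.le_def.mp hc
    have h2 : (k : ℕ) < n := k.isLt
    exact hmk (Fin.ext (by omega))

abbrev I (n : ℕ) (k : Fin n) := ({j : Fin n // j ≠ k} × Bool) ⊕ Unit

def fam (n : ℕ) (k : Fin n) : I n k → (Fin n → ℝ)
  | .inr _ => ee n k
  | .inl (⟨j, _⟩, true) => if k < j then ee n k - ee n j else ee n j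
  | .inl (⟨j, _⟩, false) => if k < j then ee n k + ee n j else ee n j + ee n k

lemma fam_coords (n : ℕ) (k : Fin n) (i : I n k) (x : Fin n) :
    fam n k i x = -1 ∨ fam n k i x = 0 ∨ fam n k i x = 1 := by
  rcases i with ⟨⟨j, hj⟩, b | b⟩ | u
  · simp only [fam]
    split_ifs <;> simp only [Pi.add_apply, ee_apply] <;> split_ifs <;> simp_all
  · simp only [fam]
    split_ifs <;> simp only [Pi.sub_apply, ee_apply] <;> split_ifs <;> simp_all
  · simp only [fam, ee_apply]; split_ifs <;> norm_num

lemma fam_one (n : ℕ) (k : Fin n) (i : I n k) : ∃ x, fam n k i x = 1 := by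
  rcases i with ⟨⟨j, hj⟩, b | b⟩ | u
  · simp only [fam]
    split_ifs with h
    · exact ⟨k, by simp [ee_self, ee_ne n (ne_of_lt h)]⟩
    · exact ⟨j, by simp [ee_self, ee_ne n hj]⟩
  · simp only [fam]
    split_ifs with h
    · exact ⟨k, by simp [ee_self, ee_ne n (ne_of_lt h)]⟩
    · exact ⟨j, by simp [ee_self]⟩
  · exact ⟨k, by simp [fam, ee_self]⟩

lemma fam_inj (n : ℕ) (k : Fin n) : Function.Injective (fam n k) := by
  have hE : ∀ (j : Fin n) (hj : j ≠ k) (b : Bool),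
      fam n k (Sum.inl (⟨j, hj⟩, b)) = ee n k → False := by
    intro j hj b h
    cases b <;> simp only [fam] at h
    · split_ifs at h with hkj
      · have h2 := congrFun h j
        simp [Pi.add_apply, ee_self, ee_ne n hj] at h2
      · have h2 := congrFun h j
        simp [Pi.add_apply, ee_self, ee_ne n hj] at h2
    · split_ifs at h with hkj
      · have h2 := congrFun h j
        simp [Pi.sub_apply, ee_self, ee_ne n hj] at h2
      · exact hj (ee_inj h)
  rintro (⟨⟨j, hj⟩, b⟩ | u) (⟨⟨j', hj'⟩, b'⟩ | u') h
  · by_cases hkj : k < j <;> by_cases hkj' : k < j'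
    all_goals cases b <;> cases b' <;> simp only [fam] at h
    · rw [if_pos hkj, if_pos hkj'] at h
      obtain rfl : j = j' := ee_inj (add_left_cancel h)
      rfl
    · rw [if_pos hkj, if_pos hkj'] at h
      have h2 := congrFun h j'
      simp only [Pi.add_apply, Pi.sub_apply, ee_apply, ee_self] at h2
      split_ifs at h2 <;> norm_num at h2
    · rw [if_pos hkj, if_pos hkj'] at h
      have h2 := congrFun h j
      simp only [Pi.add_apply, Pi.sub_apply, ee_apply, ee_self] at h2
      split_ifs at h2 <;> norm_num at h2
    · rw [if_pos hkj, if_pos hkj'] at h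
      obtain rfl : j = j' := ee_inj (sub_right_inj.mp h)
      rfl
    · rw [if_pos hkj, if_neg hkj'] at h
      have hj'k : j' < k := lt_of_le_of_ne (not_lt.mp hkj') hj'
      have h2 := congrFun h j
      simp [Pi.add_apply, ee_self, ee_ne n (ne_of_lt hkj).symm,
        ee_ne n (ne_of_lt (lt_trans hj'k hkj)).symm, ee_ne n hj] at h2
    · rw [if_pos hkj, if_neg hkj'] at h
      have hj'k : j' < k := lt_of_le_of_ne (not_lt.mp hkj') hj'
      have h2 := congrFun h k
      simp [Pi.add_apply, ee_self, ee_ne n (ne_of_lt hkj), ee_ne n (ne_of_gt hj'k)] at h2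
    · rw [if_pos hkj, if_neg hkj'] at h
      have hj'k : j' < k := lt_of_le_of_ne (not_lt.mp hkj') hj'
      have h2 := congrFun h j
      simp [Pi.add_apply, Pi.sub_apply, ee_self, ee_ne n hj,
        ee_ne n (ne_of_lt (lt_trans hj'k hkj)).symm] at h2
    · rw [if_pos hkj, if_neg hkj'] at h
      have hj'k : j' < k := lt_of_le_of_ne (not_lt.mp hkj') hj'
      have h2 := congrFun h j
      simp [Pi.sub_apply, ee_self, ee_ne n hj,
        ee_ne n (ne_of_lt (lt_trans hj'k hkj)).symm] at h2
    · rw [if_neg hkj, if_pos hkj'] at h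
      have hjk : j < k := lt_of_le_of_ne (not_lt.mp hkj) hj
      have h2 := congrFun h j'
      simp [Pi.add_apply, ee_self, ee_ne n (ne_of_lt hkj').symm,
        ee_ne n (ne_of_gt (lt_trans hjk hkj'))] at h2
    · rw [if_neg hkj, if_pos hkj'] at h
      have hjk : j < k := lt_of_le_of_ne (not_lt.mp hkj) hj
      have h2 := congrFun h j'
      simp [Pi.add_apply, Pi.sub_apply, ee_self, ee_ne n (ne_of_lt hkj').symm,
        ee_ne n (ne_of_gt (lt_trans hjk hkj'))] at h2
    · rw [if_neg hkj, if_pos hkj'] at h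
      have hjk : j < k := lt_of_le_of_ne (not_lt.mp hkj) hj
      have h2 := congrFun h k
      simp [Pi.add_apply, ee_self, ee_ne n (ne_of_gt hjk), ee_ne n (ne_of_lt hkj')] at h2
    · rw [if_neg hkj, if_pos hkj'] at h
      have hjk : j < k := lt_of_le_of_ne (not_lt.mp hkj) hj
      have h2 := congrFun h j'
      simp [Pi.sub_apply, ee_self, ee_ne n (ne_of_lt hkj').symm,
        ee_ne n (ne_of_gt (lt_trans hjk hkj'))] at h2
    · rw [if_neg hkj, if_neg hkj'] at h
      obtain rfl : j = j' := ee_inj (add_right_cancel h)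
      rfl
    · rw [if_neg hkj, if_neg hkj'] at h
      have h2 := congrFun h k
      simp [Pi.add_apply, ee_self, ee_ne n (Ne.symm hj), ee_ne n (Ne.symm hj')] at h2
    · rw [if_neg hkj, if_neg hkj'] at h
      have h2 := congrFun h k
      simp [Pi.add_apply, ee_self, ee_ne n (Ne.symm hj), ee_ne n (Ne.symm hj')] at h2
    · rw [if_neg hkj, if_neg hkj'] at h
      obtain rfl : j = j' := ee_inj h
      rfl
  · exact absurd h (by intro hh; exact hE j hj b hh)
  · exact absurd h.symm (by intro hh; exact hE j' hj' b' hh)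
  · rfl

lemma fam_mem_Sp (n : ℕ) (k : Fin n) (i : I n k) : fam n k i ∈ Sp n := by
  rcases i with ⟨⟨j, hj⟩, b | b⟩ | u
  · simp only [fam]
    split_ifs with h
    · exact Or.inl ⟨k, j, h, Or.inr rfl⟩
    · exact Or.inl ⟨j, k, lt_of_le_of_ne (not_lt.mp h) hj, Or.inr rfl⟩
  · simp only [fam]
    split_ifs with h
    · exact Or.inl ⟨k, j, h, Or.inl rfl⟩
    · exact Or.inr (Or.inl ⟨j, rfl⟩)
  · exact Or.inr (Or.inl ⟨k, rfl⟩)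

lemma phi_fam_ne (n : ℕ) (k : Fin n) (i : I n k) : phi n k (fam n k i) ≠ 0 := by
  rcases i with ⟨⟨j, hj⟩, b | b⟩ | u
  · simp only [fam]
    split_ifs with h
    · rw [map_add, phi_ee, phi_ee, if_pos (le_refl k), if_neg (not_le.mpr h)]
      norm_num
    · have hjk : j ≤ k := not_lt.mp h
      rw [map_add, phi_ee, phi_ee, if_pos (le_refl k), if_pos hjk]
      norm_num
  · simp only [fam]
    split_ifs with h
    · rw [map_sub, phi_ee, phi_ee, if_pos (le_refl k), if_neg (not_le.mpr h)]
      norm_num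
    · rw [phi_ee, if_pos (not_lt.mp h)]
      norm_num
  · simp only [fam]
    rw [phi_ee, if_pos (le_refl k)]
    norm_num

lemma fam_not_mem_span (n : ℕ) (k : Fin n) (i : I n k) :
    fam n k i ∉ Submodule.span ℝ (Set.range (alph n) \ {alph n k}) := by
  intro hm
  exact phi_fam_ne n k i (LinearMap.mem_ker.mp (span_le_ker n k hm))

lemma ray_fam_mem (n : ℕ) (k : Fin n) (i : I n k) : ray n (fam n k i) ∈ S n k :=
  ⟨fam n k i, ⟨fam_mem_Sp n k i, fam_not_mem_span n k i⟩, rfl⟩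

lemma rayfam_inj (n : ℕ) (k : Fin n) : Function.Injective (fun i => ray n (fam n k i)) := by
  intro a b h
  exact fam_inj n k (eq_of_ray_eq (fam_coords n k a) (fam_one n k b) h)

def gg (n : ℕ) : (Fin n × Fin n) × Fin 4 → (Fin n → ℝ) := fun p =>
  match p.2 with
  | 0 => ee n p.1.1 - ee n p.1.2
  | 1 => ee n p.1.1 + ee n p.1.2
  | 2 => ee n p.1.1
  | 3 => (2 : ℝ) • ee n p.1.1

lemma Sp_finite (n : ℕ) : (Sp n).Finite := by
  apply (Set.finite_range (gg n)).subset
  rintro v (⟨i, j, hij, rfl | rfl⟩ | ⟨i, rfl⟩ | ⟨i, rfl⟩)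
  · exact ⟨((i, j), 0), rfl⟩
  · exact ⟨((i, j), 1), rfl⟩
  · exact ⟨((i, i), 2), rfl⟩
  · exact ⟨((i, i), 3), rfl⟩

lemma S_finite (n : ℕ) (k : Fin n) : (S n k).Finite := by
  apply ((Sp_finite n).image (ray n)).subset
  rintro R ⟨v, ⟨hv, _⟩, rfl⟩
  exact ⟨v, hv, rfl⟩

lemma card_I (n : ℕ) (hn : 1 ≤ n) (k : Fin n) : Nat.card (I n k) = 2 * n - 1 := by
  rw [Nat.card_eq_fintype_card]
  have h1 : Fintype.card {j : Fin n // j ≠ k} = n - 1 := by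
    rw [Fintype.card_subtype_compl, Fintype.card_subtype_eq, Fintype.card_fin]
  simp only [Fintype.card_sum, Fintype.card_prod, Fintype.card_bool, Fintype.card_unit, h1]
  omega

lemma ncard_range_rayfam (n : ℕ) (hn : 1 ≤ n) (k : Fin n) :
    (Set.range (fun i => ray n (fam n k i))).ncard = 2 * n - 1 := by
  rw [← Set.image_univ, Set.ncard_image_of_injective _ (rayfam_inj n k), Set.ncard_univ,
    card_I n hn k]

lemma lower_bound (n : ℕ) (hn : 1 ≤ n) (k : Fin n) : 2 * n - 1 ≤ (S n k).ncard := by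
  rw [← ncard_range_rayfam n hn k]
  apply Set.ncard_le_ncard _ (S_finite n k)
  rintro R ⟨i, rfl⟩
  exact ray_fam_mem n k i

-- ====== exact value at k = 0 ======

lemma alph_ne_alph0 (n : ℕ) (hn : 2 ≤ n) (m : Fin n) (hm : 1 ≤ (m : ℕ)) :
    alph n m ≠ alph n ⟨0, by omega⟩ := by
  intro hc
  have h2 := congrFun hc ⟨0, by omega⟩
  have h0n : (0 : ℕ) + 1 < n := by omega
  rw [alph, alph, dif_pos h0n] at h2
  have e1 : ee n (⟨0, by omega⟩ : Fin n) ⟨0, by omega⟩ = 1 := ee_self n _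
  have e2 : ee n (⟨0 + 1, h0n⟩ : Fin n) ⟨0, by omega⟩ = 0 :=
    ee_ne n (by simp [Fin.ext_iff])
  have e3 : ee n m ⟨0, by omega⟩ = 0 := ee_ne n (by simp [Fin.ext_iff]; omega)
  split_ifs at h2 with hc1
  · have e4 : ee n (⟨(m : ℕ) + 1, hc1⟩ : Fin n) ⟨0, by omega⟩ = 0 :=
      ee_ne n (by simp [Fin.ext_iff])
    rw [Pi.sub_apply, Pi.sub_apply, e1, e2, e3, e4] at h2
    norm_num at h2
  · rw [Pi.sub_apply, e1, e2, e3] at h2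
    norm_num at h2

lemma e_mem (n : ℕ) (hn : 2 ≤ n) (m : ℕ) (h1 : 1 ≤ m) (h2 : m < n) :
    ee n ⟨m, h2⟩ ∈ Submodule.span ℝ (Set.range (alph n) \ {alph n ⟨0, by omega⟩}) := by
  have halm : alph n ⟨m, h2⟩ ∈ Set.range (alph n) \ {alph n ⟨0, by omega⟩} :=
    ⟨⟨_, rfl⟩, alph_ne_alph0 n hn ⟨m, h2⟩ h1⟩
  by_cases hm : m + 1 < n
  · have ih := e_mem n hn (m + 1) (by omega) hm
    have hadd := Submodule.add_mem _ (Submodule.subset_span halm) ih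
    have : alph n ⟨m, h2⟩ + ee n ⟨m + 1, hm⟩ = ee n ⟨m, h2⟩ := by
      rw [alph, dif_pos hm]
      abel
    rwa [this] at hadd
  · have : alph n ⟨m, h2⟩ = ee n ⟨m, h2⟩ := by rw [alph, dif_neg hm]
    exact this ▸ Submodule.subset_span halm
termination_by n - m

lemma e_mem' (n : ℕ) (hn : 2 ≤ n) (i : Fin n) (hi : (i : ℕ) ≠ 0) :
    ee n i ∈ Submodule.span ℝ (Set.range (alph n) \ {alph n ⟨0, by omega⟩}) := by
  have := e_mem n hn (i : ℕ) (by omega) i.isLt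
  simpa using this

lemma mem_span_of_zero (n : ℕ) (hn : 2 ≤ n) (v : Fin n → ℝ) (hv : v ∈ Sp n)
    (h0 : v ⟨0, by omega⟩ = 0) :
    v ∈ Submodule.span ℝ (Set.range (alph n) \ {alph n ⟨0, by omega⟩}) := by
  have key : ∀ i : Fin n, ee n i ⟨0, by omega⟩ ≠ 0 → (i : ℕ) ≠ 0 → False := by
    intro i hne h0i
    exact hne (ee_ne n (by simp [Fin.ext_iff]; omega))
  rcases hv with ⟨i, j, hij, rfl | rfl⟩ | ⟨i, rfl⟩ | ⟨i, rfl⟩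
  · have hj : (j : ℕ) ≠ 0 := by
      have := Fin.lt_def.mp hij; omega
    have hi : (i : ℕ) ≠ 0 := by
      intro hc
      rw [show i = ⟨0, by omega⟩ from Fin.ext hc, Pi.sub_apply, ee_self,
        ee_ne n (show (⟨0, by omega⟩ : Fin n) ≠ j by simp [Fin.ext_iff]; omega)] at h0
      norm_num at h0
    exact Submodule.sub_mem _ (e_mem' n hn i hi) (e_mem' n hn j hj)
  · have hj : (j : ℕ) ≠ 0 := by
      have := Fin.lt_def.mp hij; omega
    have hi : (i : ℕ) ≠ 0 := by
      intro hc
      rw [show i = ⟨0, by omega⟩ from Fin.ext hc, Pi.add_apply, ee_self,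
        ee_ne n (show (⟨0, by omega⟩ : Fin n) ≠ j by simp [Fin.ext_iff]; omega)] at h0
      norm_num at h0
    exact Submodule.add_mem _ (e_mem' n hn i hi) (e_mem' n hn j hj)
  · have hi : (i : ℕ) ≠ 0 := by
      intro hc
      rw [show i = ⟨0, by omega⟩ from Fin.ext hc, ee_self] at h0
      norm_num at h0
    exact e_mem' n hn i hi
  · have hi : (i : ℕ) ≠ 0 := by
      intro hc
      rw [Pi.smul_apply, show i = ⟨0, by omega⟩ from Fin.ext hc, ee_self] at h0
      norm_num at h0
    exact Submodule.smul_mem _ _ (e_mem' n hn i hi)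

lemma S0_eq (n : ℕ) (hn : 2 ≤ n) :
    S n ⟨0, by omega⟩ = Set.range (fun i : I n ⟨0, by omega⟩ => ray n (fam n ⟨0, by omega⟩ i)) := by
  set k0 : Fin n := ⟨0, by omega⟩ with hk0
  apply Set.Subset.antisymm
  · rintro R ⟨v, ⟨hSp, hns⟩, rfl⟩
    have hv0 : v k0 ≠ 0 := fun hz => hns (mem_span_of_zero n hn v hSp hz)
    have hzero : ∀ i : Fin n, (i : ℕ) ≠ 0 → ee n i k0 = 0 := by
      intro i hi
      exact ee_ne n (by simp [hk0, Fin.ext_iff]; omega)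
    rcases hSp with ⟨i, j, hij, rfl | rfl⟩ | ⟨i, rfl⟩ | ⟨i, rfl⟩
    · have hj : (j : ℕ) ≠ 0 := by have := Fin.lt_def.mp hij; omega
      have hi : i = k0 := by
        by_contra hc
        rw [Pi.sub_apply, hzero i (fun hz => hc (Fin.ext hz)), hzero j hj] at hv0
        norm_num at hv0
      subst hi
      have hjne : j ≠ k0 := fun hc => by rw [hc] at hij; exact lt_irrefl _ hij
      refine ⟨Sum.inl (⟨j, hjne⟩, true), ?_⟩
      refine congrArg (ray n) ?_
      simp only [fam]
      rw [if_pos hij]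
    · have hj : (j : ℕ) ≠ 0 := by have := Fin.lt_def.mp hij; omega
      have hi : i = k0 := by
        by_contra hc
        rw [Pi.add_apply, hzero i (fun hz => hc (Fin.ext hz)), hzero j hj] at hv0
        norm_num at hv0
      subst hi
      have hjne : j ≠ k0 := fun hc => by rw [hc] at hij; exact lt_irrefl _ hij
      refine ⟨Sum.inl (⟨j, hjne⟩, false), ?_⟩
      refine congrArg (ray n) ?_
      simp only [fam]
      rw [if_pos hij]
    · have hi : i = k0 := by
        by_contra hc
        rw [hzero i (fun hz => hc (Fin.ext hz))] at hv0
        norm_num at hv0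
      subst hi
      exact ⟨Sum.inr (), rfl⟩
    · have hi : i = k0 := by
        by_contra hc
        rw [Pi.smul_apply, hzero i (fun hz => hc (Fin.ext hz))] at hv0
        norm_num at hv0
      subst hi
      exact ⟨Sum.inr (), (ray_two_smul n (ee n k0)).symm⟩
  · rintro R ⟨i, rfl⟩
    exact ray_fam_mem n k0 i

lemma S0_ncard (n : ℕ) (hn : 2 ≤ n) : (S n ⟨0, by omega⟩).ncard = 2 * n - 1 := by
  rw [S0_eq n hn, ncard_range_rayfam n (by omega)]

end Stmt8


/-- In the non-reduced root system of type `BC_n` (`n ≥ 2`), the minimum over simple roots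
`α_k` of the coarse resonant codimension of `Π \ {α_k}` (counting positive-proportionality
classes of excluded positive roots) equals `2n - 1`. -/
theorem stmt8 (n : ℕ) (hn : 2 ≤ n) :
    let e : Fin n → (Fin n → ℝ) := fun i => Pi.single i 1
    let Sp : Set (Fin n → ℝ) :=
      {v | (∃ i j : Fin n, i < j ∧ (v = e i - e j ∨ v = e i + e j)) ∨
        (∃ i : Fin n, v = e i) ∨ ∃ i : Fin n, v = (2 : ℝ) • e i}
    let α : Fin n → (Fin n → ℝ) := fun k =>
      if h : (k : ℕ) + 1 < n then e k - e ⟨(k : ℕ) + 1, h⟩ else e k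
    let crc : Set (Fin n → ℝ) → ℕ := fun Pi' =>
      Set.ncard {R : Set (Fin n → ℝ) | ∃ v, (v ∈ Sp ∧ v ∉ Submodule.span ℝ Pi') ∧
        R = {w | ∃ c : ℝ, 0 < c ∧ w = c • v}}
    (⨅ k : Fin n, crc (Set.range α \ {α k})) = 2 * n - 1 := by
  intro e Sp α crc
  haveI : Nonempty (Fin n) := ⟨⟨0, by omega⟩⟩
  show (⨅ k : Fin n, (Stmt8.S n k).ncard) = 2 * n - 1
  refine le_antisymm ?_ (le_ciInf fun k => Stmt8.lower_bound n (by omega) k)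
  have h1 := ciInf_le' (fun k : Fin n => (Stmt8.S n k).ncard) (⟨0, by omega⟩ : Fin n)
  rwa [Stmt8.S0_ncard n hn] at h1
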